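/- In the MCP execution policy, if the MAPF plan is conflict-free (no vertex conflicts and no following conflicts), then the asynchronous execution preserving the plan's temporal dependencies is also conflict-free: at no point during execution do two agents occupy the same node, and no agent enters a node before the agent scheduled to leave it earlier has left. -/
import Mathlib


/-- MCP execution of a conflict-free MAPF plan is conflict-free.
The plan `loc` (paths up to timestep `T`) has no vertex conflicts and no
following conflicts.  An MCP execution assigns to each event `(i,t)` (the
arrival of agent `i` at `loc i t`) a real execution time `σ i t`, respecting
internal dependencies (`σ i t < σ i (t+1)`) and node-related dependencies
(an agent leaves a node before the agent scheduled to visit it later enters).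
Then at no execution instant do two distinct agents occupy the same node:
agent `i` occupies `loc i t` during `[σ i t, σ i (t+1))` (and forever after
`σ i T` for `t = T`). -/
theorem mcp_execution_conflict_free
    {A V : Type*} (T : ℕ) (loc : A → ℕ → V) (σ : A → ℕ → ℕ)
    (hvertex : ∀ (i j : A) (t : ℕ), i ≠ j → t ≤ T → loc i t ≠ loc j t)
    (hfollow : ∀ (i j : A) (t : ℕ), i ≠ j → t < T → loc i (t + 1) ≠ loc j t)
    (hinternal : ∀ (i : A) (t : ℕ), t < T → σ i t < σ i (t + 1))
    (hnode : ∀ (i j : A) (t t' : ℕ), i ≠ j → t < t' → t' ≤ T →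
        loc i t = loc j t' → σ i (t + 1) ≤ σ j t') :
    ∀ (i j : A) (t t' s : ℕ), i ≠ j → t ≤ T → t' ≤ T →
      σ i t ≤ s → (t < T → s < σ i (t + 1)) →
      σ j t' ≤ s → (t' < T → s < σ j (t' + 1)) →
      loc i t ≠ loc j t' := by
  intro i j t t' s hij ht ht' hi1 hi2 hj1 hj2 heq
  rcases lt_trichotomy t t' with h | h | h
  · have hTT : t < T := lt_of_lt_of_le h ht'
    have := hnode i j t t' hij h ht' heq
    exact absurd (lt_of_lt_of_le (hi2 hTT) (le_trans this hj1)) (lt_irrefl s)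
  · exact hvertex i j t hij (h ▸ ht') (h ▸ heq)
  · have hTT : t' < T := lt_of_lt_of_le h ht
    have := hnode j i t' t (Ne.symm hij) h ht heq.symm
    exact absurd (lt_of_lt_of_le (hj2 hTT) (le_trans this hi1)) (lt_irrefl s)
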